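/- The k-DPP expectation is Schur-convex in the eigenvalues: if λ is a vector of n nonnegative reals, then the map λ ↦ e₁(λ) − (k+1)e_{k+1}(λ)/e_k(λ) is Schur-convex. Equivalently, if A and B are n×n symmetric PSD matrices whose eigenvalue vectors satisfy λ_A ≺ λ_B (majorization), then D_k(A) ≤ D_k(B) for all 0 ≤ k ≤ n. -/

import Mathlib

open Matrix BigOperators

/-- The elementary symmetric polynomial of degree `k` in the entries of `x`. -/
noncomputable def esym {n : ℕ} (k : ℕ) (x : Fin n → ℝ) : ℝ :=
  ∑ S ∈ Finset.univ.powersetCard k, ∏ i ∈ S, x i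

/-- `a` is majorized by `b` (written `a ≺ b`): the total sums agree, and for every
cardinality the sum of any subset of entries of `a` is dominated by the sum of some
subset of entries of `b` of the same cardinality (equivalently, partial sums of the
decreasingly sorted vectors are dominated). -/
def Majorizes {n : ℕ} (a b : Fin n → ℝ) : Prop :=
  (∑ i, a i = ∑ i, b i) ∧
  ∀ S : Finset (Fin n), ∃ T : Finset (Fin n), T.card = S.card ∧
    ∑ i ∈ S, a i ≤ ∑ i ∈ T, b i

noncomputable def Esub {n : ℕ} (x : Fin n → ℝ) (s : Finset (Fin n)) (m : ℕ) : ℝ :=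
  ∑ T ∈ s.powersetCard m, ∏ i ∈ T, x i

lemma esym_eq_Esub {n : ℕ} (k : ℕ) (x : Fin n → ℝ) : esym k x = Esub x Finset.univ k := rfl

lemma Esub_zero {n : ℕ} (x : Fin n → ℝ) (s : Finset (Fin n)) : Esub x s 0 = 1 := by
  simp [Esub]

lemma Esub_empty_succ {n : ℕ} (x : Fin n → ℝ) (m : ℕ) : Esub x (∅ : Finset (Fin n)) (m+1) = 0 := by
  rw [Esub, Finset.powersetCard_eq_empty.mpr (by simp)]; simp

lemma Esub_congr {n : ℕ} {x y : Fin n → ℝ} {s : Finset (Fin n)} (h : ∀ i ∈ s, x i = y i)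
    (m : ℕ) : Esub x s m = Esub y s m := by
  unfold Esub
  refine Finset.sum_congr rfl fun T hT => Finset.prod_congr rfl fun i hi => ?_
  exact h i ((Finset.mem_powersetCard.mp hT).1 hi)

lemma Esub_nonneg {n : ℕ} {x : Fin n → ℝ} (hx : ∀ i, 0 ≤ x i) (s : Finset (Fin n)) (m : ℕ) :
    0 ≤ Esub x s m :=
  Finset.sum_nonneg fun T _ => Finset.prod_nonneg fun i _ => hx i

lemma Esub_insert {n : ℕ} (x : Fin n → ℝ) {s : Finset (Fin n)} {a : Fin n} (ha : a ∉ s)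
    (m : ℕ) : Esub x (insert a s) (m+1) = Esub x s (m+1) + x a * Esub x s m := by
  unfold Esub
  rw [Finset.powersetCard_succ_insert ha, Finset.sum_union, Finset.sum_image]
  · congr 1
    rw [Finset.mul_sum]
    refine Finset.sum_congr rfl fun T hT => ?_
    rw [Finset.prod_insert]
    exact fun haT => ha ((Finset.mem_powersetCard.mp hT).1 haT)
  · intro T hT U hU hTU
    have hTs := (Finset.mem_powersetCard.mp hT).1
    have hUs := (Finset.mem_powersetCard.mp hU).1
    have : ∀ i ∈ T, i ∈ U := by
      intro i hi
      have : i ∈ insert a U := by rw [← hTU]; exact Finset.mem_insert_of_mem hi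
      rcases Finset.mem_insert.mp this with h | h
      · exact absurd (h ▸ hi) (fun hh => ha (hTs hh))
      · exact h
    have h2 : ∀ i ∈ U, i ∈ T := by
      intro i hi
      have : i ∈ insert a T := by rw [hTU]; exact Finset.mem_insert_of_mem hi
      rcases Finset.mem_insert.mp this with h | h
      · exact absurd (h ▸ hi) (fun hh => ha (hUs hh))
      · exact h
    exact Finset.Subset.antisymm this h2
  · rw [Finset.disjoint_left]
    intro T hT hT2
    obtain ⟨U, hU, rfl⟩ := Finset.mem_image.mp hT2
    exact ha ((Finset.mem_powersetCard.mp hT).1 (Finset.mem_insert_self a U))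

lemma Esub_newton {n : ℕ} {x : Fin n → ℝ} (hx : ∀ i, 0 ≤ x i) (s : Finset (Fin n)) :
    ∀ i j : ℕ, i ≤ j → Esub x s i * Esub x s (j+1) ≤ Esub x s (i+1) * Esub x s j := by
  induction s using Finset.induction_on with
  | empty =>
    intro i j hij
    rw [Esub_empty_succ]
    have := Esub_nonneg hx (∅ : Finset (Fin n))
    exact le_trans (by rw [mul_zero]) (mul_nonneg (this _) (this _))
  | @insert a s ha ih =>
    intro i j hij
    rcases eq_or_lt_of_le hij with rfl | hlt
    · rw [mul_comm]
    · obtain ⟨j', rfl⟩ : ∃ j', j = j' + 1 := ⟨j - 1, by omega⟩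
      have hxa := hx a
      have hN := Esub_nonneg hx s
      cases i with
      | zero =>
        rw [Esub_zero, Esub_insert x ha, Esub_insert x ha, Esub_insert x ha, Esub_zero]
        have h1 := ih 0 (j'+1) (by omega)
        rw [Esub_zero] at h1
        norm_num at h1 ⊢
        nlinarith [mul_nonneg hxa (mul_nonneg (hN 1) (hN j')),
          mul_nonneg (mul_nonneg hxa hxa) (hN j')]
      | succ i' =>
        have hij' : i' + 1 ≤ j' := by omega
        rw [Esub_insert x ha, Esub_insert x ha, Esub_insert x ha, Esub_insert x ha]
        cases i' with
        | zero =>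
          rw [Esub_zero]
          have h0 := ih 1 (j'+1) (by omega)
          have h2 := ih 0 j' (by omega)
          have h1a := ih 0 (j'+1) (by omega)
          have h1b := ih 1 j' (by omega)
          rw [Esub_zero] at h2 h1a
          norm_num at h0 h2 h1a h1b ⊢
          nlinarith [mul_nonneg (mul_nonneg hxa hxa) (sub_nonneg.mpr h2),
            mul_nonneg hxa (sub_nonneg.mpr h1a), mul_nonneg hxa (sub_nonneg.mpr h1b)]
        | succ i'' =>
          have h0 := ih (i''+2) (j'+1) (by omega)
          have ht2 := ih (i''+1) j' (by omega)
          have ht1a := ih (i''+2) j' (by omega)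
          have ht1b := ih (i''+1) (j'+1) (by omega)
          norm_num at h0 ht2 ht1a ht1b ⊢
          nlinarith [mul_nonneg (mul_nonneg hxa hxa) (sub_nonneg.mpr ht2),
            mul_nonneg hxa (sub_nonneg.mpr ht1a), mul_nonneg hxa (sub_nonneg.mpr ht1b)]

lemma esym_eq_Esub_univ {n : ℕ} (k : ℕ) (x : Fin n → ℝ) : esym k x = Esub x Finset.univ k := rfl

lemma esym_nonneg {n : ℕ} {x : Fin n → ℝ} (hx : ∀ i, 0 ≤ x i) (m : ℕ) : 0 ≤ esym m x :=
  Esub_nonneg hx _ m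

lemma univ_decomp {n : ℕ} {i j : Fin n} (hij : i ≠ j) :
    (Finset.univ : Finset (Fin n)) = insert i (insert j ((Finset.univ.erase i).erase j)) ∧
      i ∉ insert j ((Finset.univ.erase i).erase j) ∧ j ∉ (Finset.univ.erase i).erase j := by
  have hj : j ∈ Finset.univ.erase i := Finset.mem_erase.mpr ⟨hij.symm, Finset.mem_univ j⟩
  refine ⟨?_, ?_, Finset.notMem_erase j _⟩
  · rw [Finset.insert_erase hj]
    exact (Finset.insert_erase (Finset.mem_univ i)).symm
  · rw [Finset.insert_erase hj]
    exact Finset.notMem_erase i _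

lemma esym_expand2 {n : ℕ} (x : Fin n → ℝ) {i j : Fin n} (hij : i ≠ j) (m : ℕ) :
    esym (m+2) x = Esub x ((Finset.univ.erase i).erase j) (m+2)
      + (x i + x j) * Esub x ((Finset.univ.erase i).erase j) (m+1)
      + x i * x j * Esub x ((Finset.univ.erase i).erase j) m := by
  obtain ⟨hu, hi, hj⟩ := univ_decomp hij
  rw [esym_eq_Esub_univ]
  conv_lhs => rw [hu]
  rw [Esub_insert x hi (m+1), Esub_insert x hj (m+1), Esub_insert x hj m]
  ring

lemma esym_expand1 {n : ℕ} (x : Fin n → ℝ) {i j : Fin n} (hij : i ≠ j) :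
    esym 1 x = Esub x ((Finset.univ.erase i).erase j) 1 + (x i + x j) := by
  obtain ⟨hu, hi, hj⟩ := univ_decomp hij
  rw [esym_eq_Esub_univ]
  conv_lhs => rw [hu]
  rw [Esub_insert x hi 0, Esub_insert x hj 0, Esub_zero, Esub_zero]
  ring

section transfer
variable {n : ℕ} {x y : Fin n → ℝ} {i j : Fin n} (hij : i ≠ j)
  (hagree : ∀ l, l ≠ i → l ≠ j → x l = y l)
  (hsum : x i + x j = y i + y j) (hprod : y i * y j ≤ x i * x j)
  (hx : ∀ l, 0 ≤ x l) (hy : ∀ l, 0 ≤ y l)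

include hij hagree hsum hprod hx hy

private lemma Ecg : ∀ m, Esub y ((Finset.univ.erase i).erase j) m
    = Esub x ((Finset.univ.erase i).erase j) m := by
  intro m
  refine Esub_congr (fun l hl => ?_) m
  obtain ⟨hlj, hli, -⟩ : l ≠ j ∧ l ≠ i ∧ True := by
    obtain ⟨h1, h2⟩ := Finset.mem_erase.mp hl
    exact ⟨h1, (Finset.mem_erase.mp h2).1, trivial⟩
  exact (hagree l hli hlj).symm

lemma transfer_esym_le : ∀ m, esym m y ≤ esym m x := by
  intro m
  match m with
  | 0 => simp [esym_eq_Esub_univ, Esub_zero]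
  | 1 => rw [esym_expand1 x hij, esym_expand1 y hij, Ecg hij hagree hsum hprod hx hy, hsum]
  | (m+2) =>
    rw [esym_expand2 x hij, esym_expand2 y hij, Ecg hij hagree hsum hprod hx hy,
      Ecg hij hagree hsum hprod hx hy, Ecg hij hagree hsum hprod hx hy, hsum]
    have h1 := Esub_nonneg hx ((Finset.univ.erase i).erase j) m
    nlinarith [hprod]

lemma transfer_esym_one_eq : esym 1 y = esym 1 x := by
  rw [esym_expand1 x hij, esym_expand1 y hij, Ecg hij hagree hsum hprod hx hy, hsum]

lemma transfer_cross : ∀ k, esym (k+1) y * esym k x ≤ esym (k+1) x * esym k y := by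
  intro k
  match k with
  | 0 =>
    have h1 := transfer_esym_one_eq hij hagree hsum hprod hx hy
    simp [esym_eq_Esub_univ, Esub_zero] at *
    rw [show Esub y Finset.univ 1 = Esub x Finset.univ 1 from h1]
  | 1 =>
    have h1 := transfer_esym_one_eq hij hagree hsum hprod hx hy
    have h2 := transfer_esym_le hij hagree hsum hprod hx hy 2
    have h3 : 0 ≤ esym 1 x := esym_nonneg hx 1
    rw [h1]
    exact mul_le_mul_of_nonneg_right h2 (h1 ▸ h3)
  | (k+2) =>
    set s := (Finset.univ.erase i).erase j with hs
    have hx3 : esym (k+3) x = Esub x s (k+3) + (x i + x j) * Esub x s (k+2)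
        + x i * x j * Esub x s (k+1) := esym_expand2 x hij (k+1)
    have hx2 : esym (k+2) x = Esub x s (k+2) + (x i + x j) * Esub x s (k+1)
        + x i * x j * Esub x s k := esym_expand2 x hij k
    have hy3 : esym (k+3) y = Esub x s (k+3) + (x i + x j) * Esub x s (k+2)
        + y i * y j * Esub x s (k+1) := by
      rw [esym_expand2 y hij (k+1), Ecg hij hagree hsum hprod hx hy,
        Ecg hij hagree hsum hprod hx hy, Ecg hij hagree hsum hprod hx hy, hsum]
    have hy2 : esym (k+2) y = Esub x s (k+2) + (x i + x j) * Esub x s (k+1)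
        + y i * y j * Esub x s k := by
      rw [esym_expand2 y hij k, Ecg hij hagree hsum hprod hx hy,
        Ecg hij hagree hsum hprod hx hy, Ecg hij hagree hsum hprod hx hy, hsum]
    have hN1 : Esub x s k * Esub x s (k+3) ≤ Esub x s (k+1) * Esub x s (k+2) := by
      have := Esub_newton hx s k (k+2) (by omega)
      convert this using 2 <;> omega
    have hN2 : Esub x s k * Esub x s (k+2) ≤ Esub x s (k+1) * Esub x s (k+1) := by
      have := Esub_newton hx s k (k+1) (by omega)
      convert this using 2 <;> omega
    have hp : 0 ≤ x i + x j := add_nonneg (hx i) (hx j)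
    have hq : 0 ≤ y i * y j := mul_nonneg (hy i) (hy j)
    have hE := Esub_nonneg hx s
    rw [hx3, hx2, hy3, hy2]
    nlinarith [mul_nonneg (sub_nonneg.mpr hprod) (sub_nonneg.mpr hN1),
      mul_nonneg (mul_nonneg (sub_nonneg.mpr hprod) hp) (sub_nonneg.mpr hN2),
      hE k, hE (k+1), hE (k+2), hE (k+3)]

end transfer

/-- the first `m` indices of `Fin n` -/
def Fpre (n m : ℕ) : Finset (Fin n) := Finset.univ.filter (fun i => (i : ℕ) < m)

lemma main_induction {n : ℕ} (k : ℕ) : ∀ d : ℕ, ∀ a b : Fin n → ℝ,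
    Antitone a → Antitone b → (∀ i, 0 ≤ a i) → (∀ i, 0 ≤ b i) →
    (∑ i, a i = ∑ i, b i) →
    (∀ m : ℕ, ∑ i ∈ Fpre n m, a i ≤ ∑ i ∈ Fpre n m, b i) →
    (Finset.univ.filter (fun i => a i ≠ b i)).card ≤ d →
    0 < esym k b →
    esym k b ≤ esym k a ∧ esym (k+1) b * esym k a ≤ esym (k+1) a * esym k b := by
  intro d
  induction d with
  | zero =>
    intro a b _ _ _ _ _ _ hcard _
    have hab : a = b := by
      funext i
      by_contra hne
      have : i ∈ Finset.univ.filter (fun i => a i ≠ b i) := by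
        simp [hne]
      have := Finset.card_pos.mpr ⟨i, this⟩
      omega
    subst hab
    exact ⟨le_refl _, le_refl _⟩
  | succ d ihd =>
    intro a b ha hb ha0 hb0 hsum hpre hcard hekb
    by_cases hab : a = b
    · subst hab; exact ⟨le_refl _, le_refl _⟩
    -- find l : least index with b l < a l
    have hLne : (Finset.univ.filter (fun i => b i < a i)).Nonempty := by
      by_contra hL
      rw [Finset.not_nonempty_iff_eq_empty, Finset.filter_eq_empty_iff] at hL
      have hle : ∀ i : Fin n, a i ≤ b i := fun i => le_of_not_gt (hL (Finset.mem_univ i))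
      apply hab
      funext i
      by_contra hne
      have : ∑ i, a i < ∑ i, b i :=
        Finset.sum_lt_sum (fun i _ => hle i) ⟨i, Finset.mem_univ i, lt_of_le_of_ne (hle i) hne⟩
      linarith
    set L := Finset.univ.filter (fun i => b i < a i) with hLdef
    set l := L.min' hLne with hldef
    have hbl : b l < a l := (Finset.mem_filter.mp (L.min'_mem hLne)).2
    have hlmin : ∀ i : Fin n, i < l → a i ≤ b i := by
      intro i hi
      by_contra hgt
      exact absurd (L.min'_le i (Finset.mem_filter.mpr ⟨Finset.mem_univ i, lt_of_not_ge hgt⟩))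
        (not_le.mpr hi)
    -- find j : greatest index < l with a j < b j
    have hFsplit : Fpre n ((l : ℕ) + 1) = insert l (Fpre n (l : ℕ)) := by
      ext i
      simp only [Fpre, Finset.mem_filter, Finset.mem_univ, true_and, Finset.mem_insert]
      constructor
      · intro h
        rcases Nat.lt_or_ge (i : ℕ) (l : ℕ) with h2 | h2
        · exact Or.inr h2
        · exact Or.inl (Fin.ext (by omega))
      · rintro (rfl | h)
        · omega
        · omega
    have hlnot : l ∉ Fpre n (l : ℕ) := by simp [Fpre]
    have hpre2 : ∑ i ∈ Fpre n (l : ℕ), a i < ∑ i ∈ Fpre n (l : ℕ), b i := by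
      have := hpre ((l : ℕ) + 1)
      rw [hFsplit, Finset.sum_insert hlnot, Finset.sum_insert hlnot] at this
      linarith
    have hJne : (Finset.univ.filter (fun i => i < l ∧ a i < b i)).Nonempty := by
      by_contra hJ
      rw [Finset.not_nonempty_iff_eq_empty, Finset.filter_eq_empty_iff] at hJ
      have : ∑ i ∈ Fpre n (l : ℕ), b i ≤ ∑ i ∈ Fpre n (l : ℕ), a i := by
        refine Finset.sum_le_sum fun i hi => ?_
        have hil : i < l := by
          simp only [Fpre, Finset.mem_filter] at hi
          exact Fin.lt_def.mpr hi.2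
        have := hJ (Finset.mem_univ i)
        simp only [hil, true_and] at this
        exact le_of_not_gt this
      linarith
    set J := Finset.univ.filter (fun i => i < l ∧ a i < b i) with hJdef
    set j := J.max' hJne with hjdef
    have hjmem := J.max'_mem hJne
    have hjl : j < l := (Finset.mem_filter.mp hjmem).2.1
    have hajbj : a j < b j := (Finset.mem_filter.mp hjmem).2.2
    have hbetween : ∀ i : Fin n, j < i → i < l → a i = b i := by
      intro i hji hil
      refine le_antisymm (hlmin i hil) ?_
      by_contra hgt
      have : i ∈ J := Finset.mem_filter.mpr ⟨Finset.mem_univ i, hil, lt_of_not_ge hgt⟩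
      exact absurd (J.le_max' i this) (not_le.mpr hji)
    set δ := min (b j - a j) (a l - b l) with hδdef
    have hδpos : 0 < δ := by
      apply lt_min <;> linarith
    have hδ1 : δ ≤ b j - a j := min_le_left _ _
    have hδ2 : δ ≤ a l - b l := min_le_right _ _
    have hjlne : j ≠ l := ne_of_lt hjl
    set b' := Function.update (Function.update b j (b j - δ)) l (b l + δ) with hb'def
    have f2 : b' l = b l + δ := by simp [hb'def]
    have f1 : b' j = b j - δ := by
      rw [hb'def, Function.update_of_ne hjlne, Function.update_self]
    have f3 : ∀ i : Fin n, i ≠ j → i ≠ l → b' i = b i := by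
      intro i hij hil
      rw [hb'def, Function.update_of_ne hil, Function.update_of_ne hij]
    have hajl : a l ≤ a j := ha (le_of_lt hjl)
    have hord : b l + δ ≤ b j - δ := by linarith
    -- b' is antitone
    have hb' : Antitone b' := by
      intro p q hpq
      rcases eq_or_lt_of_le hpq with rfl | hplt
      · exact le_refl _
      by_cases hqj : q = j
      · subst hqj
        have hpl : p ≠ l := ne_of_lt (lt_trans hplt hjl)
        have hpj : p ≠ j := ne_of_lt hplt
        rw [f1, f3 p hpj hpl]
        have := hb (le_of_lt hplt)
        linarith
      by_cases hql : q = l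
      · subst hql
        by_cases hpj : p = j
        · rw [hpj, f1, f2]; exact hord
        · have hpl : p ≠ l := ne_of_lt hplt
          rw [f2, f3 p hpj hpl]
          rcases lt_or_ge p j with hpj2 | hpj2
          · have := hb (le_of_lt hpj2); linarith
          · have hjp : j < p := lt_of_le_of_ne hpj2 (Ne.symm hpj)
            have heq := hbetween p hjp hplt
            have := ha (le_of_lt hplt)
            linarith
      · rw [f3 q hqj hql]
        by_cases hpj : p = j
        · rw [hpj, f1]
          have hjq : j < q := hpj ▸ hplt
          rcases lt_or_ge q l with hql2 | hql2
          · have heq := hbetween q hjq hql2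
            have := ha (le_of_lt hjq)
            linarith
          · have hlq : l < q := lt_of_le_of_ne hql2 (Ne.symm hql)
            have := hb (le_of_lt hlq)
            linarith
        by_cases hpl : p = l
        · rw [hpl, f2]
          have hlq : l < q := hpl ▸ hplt
          have := hb (le_of_lt hlq)
          linarith
        · rw [f3 p hpj hpl]
          exact hb hpq
    -- b' nonneg
    have hb'0 : ∀ i, 0 ≤ b' i := by
      intro i
      by_cases hij : i = j
      · subst hij; rw [f1]; linarith [ha0 j]
      by_cases hil : i = l
      · subst hil; rw [f2]; linarith [hb0 l]
      · rw [f3 i hij hil]; exact hb0 i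
    -- transfer hypotheses (x := b', y := b)
    have htagree : ∀ i : Fin n, i ≠ j → i ≠ l → b' i = b i := f3
    have htsum : b' j + b' l = b j + b l := by rw [f1, f2]; ring
    have htprod : b j * b l ≤ b' j * b' l := by
      rw [f1, f2]; nlinarith
    have T1 := transfer_esym_le hjlne htagree htsum htprod hb'0 hb0
    have T2 := transfer_cross hjlne htagree htsum htprod hb'0 hb0
    -- sum formula over any finset
    have hb'eq : ∀ i : Fin n, b' i = b i + (if i = j then -δ else 0) + (if i = l then δ else 0) := by
      intro i
      by_cases hij : i = j
      · subst hij
        rw [if_pos rfl, if_neg hjlne, f1]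
        ring
      by_cases hil : i = l
      · subst hil
        rw [if_neg hij, if_pos rfl, f2]
        ring
      · rw [if_neg hij, if_neg hil, f3 i hij hil]
        ring
    have hsum_s : ∀ s : Finset (Fin n), ∑ i ∈ s, b' i
        = ∑ i ∈ s, b i + ((if j ∈ s then -δ else 0) + (if l ∈ s then δ else 0)) := by
      intro s
      rw [Finset.sum_congr rfl (fun i _ => hb'eq i), Finset.sum_add_distrib,
        Finset.sum_add_distrib, Finset.sum_ite_eq' s j (fun _ => -δ),
        Finset.sum_ite_eq' s l (fun _ => δ)]
      ring
    have hsumb' : ∑ i, b' i = ∑ i, b i := by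
      rw [hsum_s Finset.univ, if_pos (Finset.mem_univ j), if_pos (Finset.mem_univ l)]
      ring
    -- prefix sums
    have hpre' : ∀ m : ℕ, ∑ i ∈ Fpre n m, a i ≤ ∑ i ∈ Fpre n m, b' i := by
      intro m
      rw [hsum_s (Fpre n m)]
      by_cases hjm : (j : ℕ) < m
      · have hjmem2 : j ∈ Fpre n m := by simp [Fpre, hjm]
        by_cases hlm : (l : ℕ) < m
        · have hlmem : l ∈ Fpre n m := by simp [Fpre, hlm]
          rw [if_pos hjmem2, if_pos hlmem]
          have := hpre m
          linarith
        · have hlnotm : l ∉ Fpre n m := by simp [Fpre]; omega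
          rw [if_pos hjmem2, if_neg hlnotm]
          have hterm : ∀ i ∈ Fpre n m, a i ≤ b i := by
            intro i hi
            simp only [Fpre, Finset.mem_filter] at hi
            have : i < l := by
              rw [Fin.lt_def]; omega
            exact hlmin i this
          have hterm2 : ∀ i ∈ Fpre n m, 0 ≤ b i - a i := fun i hi => by linarith [hterm i hi]
          have hsingle : b j - a j ≤ ∑ i ∈ Fpre n m, (b i - a i) :=
            Finset.single_le_sum hterm2 hjmem2
          rw [Finset.sum_sub_distrib] at hsingle
          linarith
      · -- m ≤ j < l : nothing updated inside
        have hjnotm : j ∉ Fpre n m := by simp [Fpre]; omega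
        have hlnotm : l ∉ Fpre n m := by
          simp only [Fpre, Finset.mem_filter, Finset.mem_univ, true_and]
          have : (j : ℕ) < (l : ℕ) := hjl
          omega
        rw [if_neg hjnotm, if_neg hlnotm]
        have := hpre m
        linarith
    -- cardinality decreases
    have hcard' : (Finset.univ.filter (fun i => a i ≠ b' i)).card ≤ d := by
      have hjold : j ∈ Finset.univ.filter (fun i => a i ≠ b i) := by
        simp [ne_of_lt hajbj]
      have hlold : l ∈ Finset.univ.filter (fun i => a i ≠ b i) := by
        simp [(ne_of_lt hbl).symm]
      rcases min_cases (b j - a j) (a l - b l) with ⟨hmin, _⟩ | ⟨hmin, _⟩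
      · -- δ = b j - a j, so b' j = a j
        have hfix : b' j = a j := by rw [f1, hδdef, hmin]; ring
        have hsub : Finset.univ.filter (fun i => a i ≠ b' i)
            ⊆ (Finset.univ.filter (fun i => a i ≠ b i)).erase j := by
          intro i hi
          simp only [Finset.mem_filter, Finset.mem_univ, true_and] at hi
          have hij2 : i ≠ j := by
            intro h; subst h; exact hi hfix.symm
          refine Finset.mem_erase.mpr ⟨hij2, Finset.mem_filter.mpr ⟨Finset.mem_univ i, ?_⟩⟩
          by_cases hil2 : i = l
          · subst hil2; exact (ne_of_lt hbl).symm
          · rw [← f3 i hij2 hil2]; exact hi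
        have := Finset.card_le_card hsub
        rw [Finset.card_erase_of_mem hjold] at this
        omega
      · -- δ = a l - b l, so b' l = a l
        have hfix : b' l = a l := by rw [f2, hδdef, hmin]; ring
        have hsub : Finset.univ.filter (fun i => a i ≠ b' i)
            ⊆ (Finset.univ.filter (fun i => a i ≠ b i)).erase l := by
          intro i hi
          simp only [Finset.mem_filter, Finset.mem_univ, true_and] at hi
          have hil2 : i ≠ l := by
            intro h; subst h; exact hi hfix.symm
          refine Finset.mem_erase.mpr ⟨hil2, Finset.mem_filter.mpr ⟨Finset.mem_univ i, ?_⟩⟩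
          by_cases hij2 : i = j
          · subst hij2; exact ne_of_lt hajbj
          · rw [← f3 i hij2 hil2]; exact hi
        have := Finset.card_le_card hsub
        rw [Finset.card_erase_of_mem hlold] at this
        omega
    -- esym k b' is positive
    have hekb' : 0 < esym k b' := lt_of_lt_of_le hekb (T1 k)
    -- apply IH
    obtain ⟨I1, I2⟩ := ihd a b' ha hb' ha0 hb'0 (hsumb' ▸ hsum) hpre' hcard' hekb'
    constructor
    · exact le_trans (T1 k) I1
    · have c1 := T2 k
      have hQ : 0 < esym k b' := hekb'
      have hP : 0 < esym k b := hekb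
      have hR : 0 < esym k a := lt_of_lt_of_le hekb' I1
      have step : esym (k+1) b * esym k a * esym k b' ≤ esym (k+1) a * esym k b * esym k b' := by
        nlinarith [mul_le_mul_of_nonneg_right c1 (le_of_lt hR),
          mul_le_mul_of_nonneg_right I2 (le_of_lt hP)]
      exact le_of_mul_le_mul_right step hQ

lemma esym_comp_perm {n : ℕ} (k : ℕ) (x : Fin n → ℝ) (σ : Equiv.Perm (Fin n)) :
    esym k (x ∘ σ) = esym k x := by
  unfold esym
  refine Finset.sum_equiv σ.finsetCongr ?_ ?_
  · intro S
    simp only [Finset.mem_powersetCard_univ, Equiv.finsetCongr_apply, Finset.card_map]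
  · intro S _
    rw [Equiv.finsetCongr_apply, Finset.prod_map]
    rfl

lemma strictMono_val_le {m n : ℕ} (g : Fin m → Fin n) (hg : StrictMono g) :
    ∀ v : ℕ, ∀ h : v < m, v ≤ ((g ⟨v, h⟩ : Fin n) : ℕ) := by
  intro v
  induction v with
  | zero => intro h; exact Nat.zero_le _
  | succ v ih =>
    intro h
    have hv : v < m := by omega
    have h1 := ih hv
    have h2 : g ⟨v, hv⟩ < g ⟨v+1, h⟩ := hg (by simp [Fin.lt_def])
    rw [Fin.lt_def] at h2
    omega

lemma Fpre_eq_map {n m : ℕ} (hm : m ≤ n) :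
    Fpre n m = Finset.univ.map (Fin.castLEEmb hm) := by
  ext i
  rw [Fpre, Finset.mem_filter, Finset.mem_map]
  constructor
  · rintro ⟨-, h⟩
    exact ⟨⟨(i : ℕ), h⟩, Finset.mem_univ _, Fin.ext rfl⟩
  · rintro ⟨q, -, rfl⟩
    exact ⟨Finset.mem_univ _, by simpa using q.2⟩

lemma sum_le_prefix {n : ℕ} (f : Fin n → ℝ) (hf : Antitone f) (T : Finset (Fin n)) :
    ∑ i ∈ T, f i ≤ ∑ i ∈ Fpre n T.card, f i := by
  have hmn : T.card ≤ n := le_trans (Finset.card_le_univ T) (by simp)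
  have hT : T = Finset.univ.map (T.orderEmbOfFin rfl).toEmbedding := by
    ext i
    simp only [Finset.mem_map, Finset.mem_univ, true_and]
    constructor
    · intro h
      have : i ∈ Set.range (T.orderEmbOfFin rfl) := by
        rw [Finset.range_orderEmbOfFin]; exact h
      obtain ⟨k, hk⟩ := this
      exact ⟨k, hk⟩
    · rintro ⟨k, rfl⟩
      have : (T.orderEmbOfFin rfl) k ∈ Set.range (T.orderEmbOfFin rfl) := ⟨k, rfl⟩
      rw [Finset.range_orderEmbOfFin] at this
      exact this
  rw [Fpre_eq_map hmn]
  conv_lhs => rw [hT]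
  rw [Finset.sum_map, Finset.sum_map]
  refine Finset.sum_le_sum fun k _ => ?_
  apply hf
  rw [Fin.le_def]
  have := strictMono_val_le _ (T.orderEmbOfFin rfl).strictMono (k : ℕ) k.2
  simpa using this

lemma trace_eq_sum_eigs {n : ℕ} {A : Matrix (Fin n) (Fin n) ℝ} (hA : A.IsHermitian) :
    A.trace = ∑ i, hA.eigenvalues i := by
  conv_lhs => rw [hA.spectral_theorem]
  rw [Unitary.conjStarAlgAut_apply]
  rw [Matrix.trace_mul_cycle]
  rw [show (star (Matrix.IsHermitian.eigenvectorUnitary hA : Matrix (Fin n) (Fin n) ℝ))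
      * (Matrix.IsHermitian.eigenvectorUnitary hA : Matrix (Fin n) (Fin n) ℝ) = 1 from
    (Matrix.mem_unitaryGroup_iff').mp (Matrix.IsHermitian.eigenvectorUnitary hA).2]
  rw [one_mul, Matrix.trace_diagonal]
  simp [RCLike.ofReal]

theorem stmt_14 (n : ℕ) (A B : Matrix (Fin n) (Fin n) ℝ)
    (hA : A.PosSemidef) (hB : B.PosSemidef)
    (hmaj : Majorizes hA.1.eigenvalues hB.1.eigenvalues)
    (k : ℕ) (hk : k ≤ n)
    (heA : 0 < esym k hA.1.eigenvalues) (heB : 0 < esym k hB.1.eigenvalues) :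
    A.trace - (k + 1) * esym (k + 1) hA.1.eigenvalues / esym k hA.1.eigenvalues
      ≤ B.trace - (k + 1) * esym (k + 1) hB.1.eigenvalues / esym k hB.1.eigenvalues := by
  set a := hA.1.eigenvalues with hadef
  set b := hB.1.eigenvalues with hbdef
  have ha0 : ∀ i, 0 ≤ a i := hA.eigenvalues_nonneg
  have hb0 : ∀ i, 0 ≤ b i := hB.eigenvalues_nonneg
  set σa := Tuple.sort (fun i => -a i) with hσa
  set σb := Tuple.sort (fun i => -b i) with hσb
  set a' := a ∘ σa with ha'
  set b' := b ∘ σb with hb'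
  have haa : Antitone a' := by
    intro p q hpq
    have := Tuple.monotone_sort (fun i => -a i) hpq
    simp only [Function.comp_apply] at this ⊢
    exact le_of_neg_le_neg this
  have hbb : Antitone b' := by
    intro p q hpq
    have := Tuple.monotone_sort (fun i => -b i) hpq
    simp only [Function.comp_apply] at this ⊢
    exact le_of_neg_le_neg this
  have ha'0 : ∀ i, 0 ≤ a' i := fun i => ha0 _
  have hb'0 : ∀ i, 0 ≤ b' i := fun i => hb0 _
  have hsa : ∑ i, a' i = ∑ i, a i := Equiv.sum_comp σa a
  have hsb : ∑ i, b' i = ∑ i, b i := Equiv.sum_comp σb b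
  have hsum' : ∑ i, a' i = ∑ i, b' i := by rw [hsa, hsb]; exact hmaj.1
  have hpre : ∀ m : ℕ, ∑ i ∈ Fpre n m, a' i ≤ ∑ i ∈ Fpre n m, b' i := by
    intro m
    have h1 : ∑ i ∈ Fpre n m, a' i = ∑ i ∈ (Fpre n m).map σa.toEmbedding, a i := by
      rw [Finset.sum_map]; rfl
    obtain ⟨T, hTcard, hTle⟩ := hmaj.2 ((Fpre n m).map σa.toEmbedding)
    have h2 : ∑ i ∈ T, b i = ∑ i ∈ T.map σb.symm.toEmbedding, b' i := by
      rw [Finset.sum_map]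
      refine Finset.sum_congr rfl fun i _ => ?_
      simp [hb']
    have h3 : ∑ i ∈ T.map σb.symm.toEmbedding, b' i
        ≤ ∑ i ∈ Fpre n ((T.map σb.symm.toEmbedding).card), b' i :=
      sum_le_prefix b' hbb _
    have hc : (T.map σb.symm.toEmbedding).card = (Fpre n m).card := by
      rw [Finset.card_map, hTcard, Finset.card_map]
    have h4 : Fpre n ((Fpre n m).card) = Fpre n m := by
      have hcard : (Fpre n m).card = min m n := by
        rcases le_or_gt m n with h | h
        · rw [Fpre_eq_map h, Finset.card_map, Finset.card_univ, Fintype.card_fin]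
          omega
        · have : Fpre n m = Finset.univ := by
            ext i
            simp only [Fpre, Finset.mem_filter, Finset.mem_univ, true_and, iff_true]
            exact lt_of_lt_of_le i.2 h.le
          rw [this, Finset.card_univ, Fintype.card_fin]
          omega
      have hcard' : (Finset.univ.filter (fun i : Fin n => (i : ℕ) < m)).card = min m n := hcard
      ext i
      simp only [Fpre, Finset.mem_filter, Finset.mem_univ, true_and, hcard']
      have := i.isLt
      omega
    calc ∑ i ∈ Fpre n m, a' i = ∑ i ∈ (Fpre n m).map σa.toEmbedding, a i := h1
      _ ≤ ∑ i ∈ T, b i := hTle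
      _ = ∑ i ∈ T.map σb.symm.toEmbedding, b' i := h2
      _ ≤ ∑ i ∈ Fpre n ((T.map σb.symm.toEmbedding).card), b' i := h3
      _ = ∑ i ∈ Fpre n m, b' i := by rw [hc, h4]
  have hesa : ∀ m, esym m a' = esym m a := fun m => esym_comp_perm m a σa
  have hesb : ∀ m, esym m b' = esym m b := fun m => esym_comp_perm m b σb
  have heb' : 0 < esym k b' := by rw [hesb]; exact heB
  obtain ⟨hE1, hE2⟩ := main_induction k (Finset.univ.filter (fun i => a' i ≠ b' i)).card
    a' b' haa hbb ha'0 hb'0 hsum' hpre (le_refl _) heb'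
  rw [hesa, hesb] at hE1
  rw [hesa, hesb, hesa, hesb] at hE2
  have htr : A.trace = B.trace := by
    rw [trace_eq_sum_eigs hA.1, trace_eq_sum_eigs hB.1, ← hadef, ← hbdef, hmaj.1]
  have hdiv : esym (k+1) b / esym k b ≤ esym (k+1) a / esym k a :=
    (div_le_div_iff₀ heB heA).mpr hE2
  have hmul : ((k : ℝ) + 1) * esym (k+1) b / esym k b ≤ ((k : ℝ) + 1) * esym (k+1) a / esym k a := by
    rw [mul_div_assoc, mul_div_assoc]
    exact mul_le_mul_of_nonneg_left hdiv (by positivity)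
  rw [htr]
  linarith
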